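/- Let x₁, …, x_n be pairwise orthogonal nonzero vectors in an inner product space, and let y_n be the element of minimal norm among all linear combinations a₁x₁ + ⋯ + a_n x_n with a₁ + ⋯ + a_n = 1. Then 1/‖y_n‖² = Σ_{i=1}^n 1/‖x_i‖². Consequently, if the series Σ 1/‖x_i‖² diverges, then ‖y_n‖ → 0 as n → ∞. -/

import Mathlib

open Finset Filter

/-- Let `x₁, …, x_n` be pairwise orthogonal nonzero vectors and let `y n` be the
minimal-norm affine combination (coefficients summing to 1) of `x₀, …, x_{n-1}`.
Then `1/‖y n‖² = Σ_{i<n} 1/‖x i‖²`; if `Σ 1/‖x i‖²` diverges then `‖y n‖ → 0`. -/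
theorem minimal_norm_affine_combination {E : Type*}
    [NormedAddCommGroup E] [InnerProductSpace ℝ E] (x : ℕ → E)
    (horth : ∀ i j, i ≠ j → (inner ℝ (x i) (x j) : ℝ) = 0)
    (hne : ∀ i, x i ≠ 0) (y : ℕ → E)
    (hy : ∀ n, 1 ≤ n →
      (∃ a : ℕ → ℝ, (∑ i ∈ Finset.range n, a i) = 1 ∧
        y n = ∑ i ∈ Finset.range n, a i • x i) ∧
      (∀ z : E, (∃ a : ℕ → ℝ, (∑ i ∈ Finset.range n, a i) = 1 ∧
        z = ∑ i ∈ Finset.range n, a i • x i) → ‖y n‖ ≤ ‖z‖)) :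
    (∀ n, 1 ≤ n → 1 / ‖y n‖ ^ 2 = ∑ i ∈ Finset.range n, 1 / ‖x i‖ ^ 2) ∧
    (Tendsto (fun n => ∑ i ∈ Finset.range n, 1 / ‖x i‖ ^ 2) atTop atTop →
      Tendsto (fun n => ‖y n‖) atTop (nhds 0)) := by
  have hxpos : ∀ i, (0:ℝ) < ‖x i‖ ^ 2 := fun i => by
    have : ‖x i‖ ≠ 0 := norm_ne_zero_iff.mpr (hne i)
    positivity
  have hnorm : ∀ (n : ℕ) (a : ℕ → ℝ),
      ‖∑ i ∈ Finset.range n, a i • x i‖ ^ 2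
        = ∑ i ∈ Finset.range n, (a i) ^ 2 * ‖x i‖ ^ 2 := by
    intro n a
    rw [← real_inner_self_eq_norm_sq, sum_inner]
    refine Finset.sum_congr rfl fun i hi => ?_
    rw [inner_sum, Finset.sum_eq_single i]
    · rw [real_inner_smul_left, real_inner_smul_right, real_inner_self_eq_norm_sq]; ring
    · intro j _ hji
      rw [real_inner_smul_left, real_inner_smul_right, horth i j hji.symm]; ring
    · intro h; exact absurd hi h
  have key : ∀ n, 1 ≤ n →
      ‖y n‖ ^ 2 = 1 / (∑ i ∈ Finset.range n, 1 / ‖x i‖ ^ 2) := by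
    intro n hn
    set S := ∑ i ∈ Finset.range n, 1 / ‖x i‖ ^ 2 with hS
    have hSpos : 0 < S := Finset.sum_pos (fun i _ => by
        have := hxpos i; positivity)
      (by simp [Finset.nonempty_range_iff]; omega)
    obtain ⟨⟨a, ha1, hya⟩, hmin⟩ := hy n hn
    have hub : ‖y n‖ ^ 2 ≤ 1 / S := by
      have hsum : (∑ i ∈ Finset.range n, (1 / ‖x i‖ ^ 2) / S) = 1 := by
        rw [← Finset.sum_div, ← hS, div_self hSpos.ne']
      have hz := hmin (∑ i ∈ Finset.range n, ((1 / ‖x i‖ ^ 2) / S) • x i)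
        ⟨fun i => (1 / ‖x i‖ ^ 2) / S, hsum, rfl⟩
      have hzn : ‖∑ i ∈ Finset.range n, ((1 / ‖x i‖ ^ 2) / S) • x i‖ ^ 2 = 1 / S := by
        rw [hnorm]
        have h1 : ∀ i ∈ Finset.range n,
            ((1 / ‖x i‖ ^ 2) / S) ^ 2 * ‖x i‖ ^ 2 = (1 / ‖x i‖ ^ 2) / S / S := by
          intro i _
          have hx := (hxpos i).ne'
          field_simp
        rw [Finset.sum_congr rfl h1]
        rw [← Finset.sum_div, ← Finset.sum_div, ← hS, div_self hSpos.ne']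
      calc ‖y n‖ ^ 2 ≤ ‖∑ i ∈ Finset.range n, ((1 / ‖x i‖ ^ 2) / S) • x i‖ ^ 2 :=
            pow_le_pow_left₀ (norm_nonneg _) hz 2
        _ = 1 / S := hzn
    have hlb : 1 / S ≤ ‖y n‖ ^ 2 := by
      have hcs := Finset.sum_mul_sq_le_sq_mul_sq (Finset.range n)
        (fun i => a i * ‖x i‖) (fun i => 1 / ‖x i‖)
      have h1 : (∑ i ∈ Finset.range n, (a i * ‖x i‖) * (1 / ‖x i‖)) = 1 := by
        have he : ∀ i ∈ Finset.range n, (a i * ‖x i‖) * (1 / ‖x i‖) = a i := by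
          intro i _
          have : ‖x i‖ ≠ 0 := norm_ne_zero_iff.mpr (hne i)
          field_simp
        rw [Finset.sum_congr rfl he, ha1]
      have h2 : (∑ i ∈ Finset.range n, (a i * ‖x i‖) ^ 2) = ‖y n‖ ^ 2 := by
        rw [hya, hnorm]
        exact Finset.sum_congr rfl fun i _ => by ring
      have h3 : (∑ i ∈ Finset.range n, (1 / ‖x i‖) ^ 2) = S := by
        rw [hS]
        exact Finset.sum_congr rfl fun i _ => by rw [div_pow, one_pow]
      rw [h1, h2, h3, one_pow] at hcs
      rw [div_le_iff₀ hSpos]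
      linarith
    exact le_antisymm hub hlb
  constructor
  · intro n hn
    rw [key n hn, one_div_one_div]
  · intro hdiv
    have h0 : Tendsto (fun n => 1 / ∑ i ∈ Finset.range n, 1 / ‖x i‖ ^ 2)
        atTop (nhds 0) := by
      simpa [one_div, Pi.inv_def] using hdiv.inv_tendsto_atTop
    have h1 : Tendsto (fun n => Real.sqrt
        (1 / ∑ i ∈ Finset.range n, 1 / ‖x i‖ ^ 2)) atTop (nhds 0) := by
      have := (Real.continuous_sqrt.tendsto 0).comp h0
      simpa only [Function.comp_def, Real.sqrt_zero] using this
    refine h1.congr' ?_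
    filter_upwards [eventually_ge_atTop 1] with n hn
    rw [← Real.sqrt_sq (norm_nonneg (y n)), key n hn]
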